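/- Let M, G ∈ GL(d,R) have finite ∂-support. Then the invertible matrix S(G)·M·G⁻¹ has finite ∂-support, and for every j ∈ {1,…,N}: E_j(S(G)·M·G⁻¹) = S(G)·E_j(M)·S(G)⁻¹. -/

import Mathlib

/-- The operator `∇_M(Q) = S(M⁻¹·Q·M)` (with `S` applied entrywise). -/
noncomputable def nabla {R : Type*} [CommRing R] {d : ℕ} (S : R ≃+* R)
    (M : Matrix (Fin d) (Fin d) R) (Q : Matrix (Fin d) (Fin d) R) :
    Matrix (Fin d) (Fin d) R :=
  (M⁻¹ * Q * M).map ⇑S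

/-- The inverse operator `∇_M⁻¹(Q) = M·S⁻¹(Q)·M⁻¹`. -/
noncomputable def nablaInv {R : Type*} [CommRing R] {d : ℕ} (S : R ≃+* R)
    (M : Matrix (Fin d) (Fin d) R) (Q : Matrix (Fin d) (Fin d) R) :
    Matrix (Fin d) (Fin d) R :=
  M * (Q.map ⇑S.symm) * M⁻¹

/-- Integer powers `∇_M^k` of the operator `∇_M`. -/
noncomputable def nablaZPow {R : Type*} [CommRing R] {d : ℕ} (S : R ≃+* R)
    (M : Matrix (Fin d) (Fin d) R) (k : ℤ) (Q : Matrix (Fin d) (Fin d) R) :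
    Matrix (Fin d) (Fin d) R :=
  if 0 ≤ k then (nabla S M)^[k.toNat] Q else (nablaInv S M)^[(-k).toNat] Q

/-- `E_j(M) = Σ_{ℓ∈ℤ} ∇_M^{−ℓ}(∂_{j,ℓ}(M)·M⁻¹)` (a finite sum, taken as `finsum`). -/
noncomputable def Ej {R : Type*} [CommRing R] {d N : ℕ} (S : R ≃+* R)
    (P : Fin N → ℤ → R → R) (j : Fin N) (M : Matrix (Fin d) (Fin d) R) :
    Matrix (Fin d) (Fin d) R :=
  ∑ᶠ ℓ : ℤ, nablaZPow S M (-ℓ) ((M.map (P j ℓ)) * M⁻¹)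

section Aux

variable {R : Type*} [CommRing R] {d : ℕ}

private lemma mapE_mul (e : R ≃+* R) (A B : Matrix (Fin d) (Fin d) R) :
    (A * B).map ⇑e = A.map ⇑e * B.map ⇑e := by
  ext i k; simp [Matrix.map_apply, Matrix.mul_apply, map_sum]

private lemma mapE_one (e : R ≃+* R) : (1 : Matrix (Fin d) (Fin d) R).map ⇑e = 1 :=
  Matrix.map_one _ (map_zero e) (map_one e)

private lemma mapE_inv (e : R ≃+* R) (A : Matrix (Fin d) (Fin d) R) (h : IsUnit A.det) :
    (A.map ⇑e)⁻¹ = A⁻¹.map ⇑e :=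
  Matrix.inv_eq_left_inv (by rw [← mapE_mul, Matrix.nonsing_inv_mul A h, mapE_one])

private lemma mapE_symm (e : R ≃+* R) (A : Matrix (Fin d) (Fin d) R) :
    (A.map ⇑e).map ⇑e.symm = A := by ext i k; simp [Matrix.map_apply]

private lemma mapE_symm' (e : R ≃+* R) (A : Matrix (Fin d) (Fin d) R) :
    (A.map ⇑e.symm).map ⇑e = A := by ext i k; simp [Matrix.map_apply]

private lemma mapE_det (e : R ≃+* R) (A : Matrix (Fin d) (Fin d) R) :
    (A.map ⇑e).det = e A.det := (RingEquiv.map_det e A).symm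

variable (δ : R → R) (hadd : ∀ x y, δ (x + y) = δ x + δ y)
  (hmul : ∀ x y, δ (x * y) = x * δ y + δ x * y)

include hadd in
private lemma der_zero : δ 0 = 0 := by
  have h := hadd 0 0
  rw [add_zero] at h
  exact (add_left_cancel (a := δ 0) (by rw [add_zero, ← h])).symm

omit hadd in
include hmul in
private lemma der_one : δ 1 = 0 := by
  have h := hmul 1 1
  rw [mul_one, one_mul, mul_one] at h
  exact (add_left_cancel (a := δ 1) (by rw [add_zero, ← h])).symm

include hadd hmul in
private lemma der_map_mul (A B : Matrix (Fin d) (Fin d) R) :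
    (A * B).map δ = A * B.map δ + (A.map δ) * B := by
  ext i k
  simp only [Matrix.map_apply, Matrix.mul_apply, Matrix.add_apply]
  rw [show δ (∑ m, A i m * B m k) = ∑ m, δ (A i m * B m k) from
    map_sum (AddMonoidHom.mk' δ hadd) _ _]
  simp only [hmul]
  rw [Finset.sum_add_distrib]

include hadd hmul in
private lemma der_map_one : (1 : Matrix (Fin d) (Fin d) R).map δ = 0 := by
  ext i k
  simp only [Matrix.map_apply, Matrix.one_apply, Matrix.zero_apply]
  split_ifs
  · exact der_one δ hmul
  · exact der_zero δ hadd

include hadd hmul in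
private lemma der_map_inv (A : Matrix (Fin d) (Fin d) R) (h : IsUnit A.det) :
    (A⁻¹).map δ = -(A⁻¹ * (A.map δ) * A⁻¹) := by
  have h1 : (A⁻¹ * A).map δ = 0 := by
    rw [Matrix.nonsing_inv_mul A h, der_map_one δ hadd hmul]
  rw [der_map_mul δ hadd hmul] at h1
  have h2 : (A⁻¹.map δ) * A = -(A⁻¹ * A.map δ) := by
    rw [← add_eq_zero_iff_eq_neg']
    linear_combination (norm := noncomm_ring) h1
  calc (A⁻¹).map δ = ((A⁻¹.map δ) * A) * A⁻¹ := by
        rw [mul_assoc, Matrix.mul_nonsing_inv A h, mul_one]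
    _ = -(A⁻¹ * A.map δ * A⁻¹) := by rw [h2]; noncomm_ring

end Aux

section NablaAux

variable {R : Type*} [CommRing R] {d : ℕ} (S : R ≃+* R)
variable (M G : Matrix (Fin d) (Fin d) R)

private lemma nabla_nablaInv (hM : IsUnit M.det) (Q : Matrix (Fin d) (Fin d) R) :
    nabla S M (nablaInv S M Q) = Q := by
  unfold nabla nablaInv
  rw [show M⁻¹ * (M * Q.map ⇑S.symm * M⁻¹) * M
      = (M⁻¹ * M) * Q.map ⇑S.symm * (M⁻¹ * M) by noncomm_ring,
    Matrix.nonsing_inv_mul M hM, one_mul, mul_one, mapE_symm']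

private lemma nabla_add (Q₁ Q₂ : Matrix (Fin d) (Fin d) R) :
    nabla S M (Q₁ + Q₂) = nabla S M Q₁ + nabla S M Q₂ := by
  unfold nabla; ext i k
  simp only [Matrix.map_apply, Matrix.add_apply, mul_add, add_mul, map_add]

private lemma nablaInv_add (Q₁ Q₂ : Matrix (Fin d) (Fin d) R) :
    nablaInv S M (Q₁ + Q₂) = nablaInv S M Q₁ + nablaInv S M Q₂ := by
  unfold nablaInv
  rw [show (Q₁ + Q₂).map ⇑S.symm = Q₁.map ⇑S.symm + Q₂.map ⇑S.symm by
    ext i k; simp [Matrix.map_apply], mul_add, add_mul]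

private lemma iterate_add {α : Type*} [AddCommGroup α] (f : α → α)
    (hf : ∀ a b, f (a + b) = f a + f b) (n : ℕ) (a b : α) :
    f^[n] (a + b) = f^[n] a + f^[n] b := by
  induction n generalizing a b with
  | zero => simp
  | succ n ih => rw [Function.iterate_succ_apply, hf, ih,
      Function.iterate_succ_apply, Function.iterate_succ_apply]

/-- `nablaZPow S M k` as an additive monoid hom. -/
private noncomputable def nablaZPowHom (k : ℤ) :
    Matrix (Fin d) (Fin d) R →+ Matrix (Fin d) (Fin d) R :=
  AddMonoidHom.mk' (nablaZPow S M k) (by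
    intro a b
    unfold nablaZPow
    split_ifs
    · exact iterate_add _ (nabla_add S M) _ a b
    · exact iterate_add _ (nablaInv_add S M) _ a b)

private lemma nablaZPowHom_apply (k : ℤ) (Q : Matrix (Fin d) (Fin d) R) :
    nablaZPowHom S M k Q = nablaZPow S M k Q := rfl

private lemma nablaZPow_zero_matrix (k : ℤ) : nablaZPow S M k 0 = 0 :=
  (nablaZPowHom S M k).map_zero

private lemma nablaZPow_sub_one (hM : IsUnit M.det) (k : ℤ) (Q : Matrix (Fin d) (Fin d) R) :
    nablaZPow S M (k - 1) Q = nablaZPow S M k (nablaInv S M Q) := by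
  unfold nablaZPow
  rcases le_or_gt 1 k with hk | hk
  · rw [if_pos (by omega), if_pos (by omega)]
    have : k.toNat = (k - 1).toNat + 1 := by omega
    rw [this, Function.iterate_succ_apply, nabla_nablaInv S M hM]
  · rcases eq_or_lt_of_le (by omega : k ≤ 0) with hk0 | hk0
    · subst hk0
      norm_num
    · rw [if_neg (by omega), if_neg (by omega)]
      have : (-(k - 1)).toNat = (-k).toNat + 1 := by omega
      rw [this, Function.iterate_succ_apply]

variable (hM : IsUnit M.det) (hG : IsUnit G.det)

include hG in
private lemma hU_det : IsUnit (Matrix.det (G.map ⇑S)) := by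
  rw [mapE_det]; exact hG.map S

include hM hG in
private lemma hM'_det : IsUnit (Matrix.det (G.map ⇑S * M * G⁻¹)) := by
  rw [Matrix.det_mul, Matrix.det_mul]
  exact ((hU_det S G hG).mul hM).mul (Matrix.isUnit_nonsing_inv_det G hG)

omit hM in
include hG in
private lemma M'_inv : ((G.map ⇑S * M * G⁻¹))⁻¹ = G * M⁻¹ * (G.map ⇑S)⁻¹ := by
  rw [Matrix.mul_inv_rev, Matrix.mul_inv_rev, Matrix.nonsing_inv_nonsing_inv G hG]
  noncomm_ring

omit hM in
include hG in
private lemma nabla_conj (Q : Matrix (Fin d) (Fin d) R) :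
    nabla S (G.map ⇑S * M * G⁻¹) Q
      = (G.map ⇑S) * (nabla S M ((G.map ⇑S)⁻¹ * Q * (G.map ⇑S))) * (G.map ⇑S)⁻¹ := by
  unfold nabla
  rw [M'_inv S M G hG, mapE_inv S G hG,
    show G * M⁻¹ * G⁻¹.map ⇑S * Q * (G.map ⇑S * M * G⁻¹)
      = G * (M⁻¹ * (G⁻¹.map ⇑S * Q * (G.map ⇑S)) * M) * G⁻¹ by noncomm_ring,
    mapE_mul, mapE_mul]

omit hM in
include hG in
private lemma nablaInv_conj (Q : Matrix (Fin d) (Fin d) R) :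
    nablaInv S (G.map ⇑S * M * G⁻¹) Q
      = (G.map ⇑S) * (nablaInv S M ((G.map ⇑S)⁻¹ * Q * (G.map ⇑S))) * (G.map ⇑S)⁻¹ := by
  unfold nablaInv
  rw [M'_inv S M G hG, mapE_inv S G hG, mapE_mul, mapE_mul, mapE_symm, mapE_symm]
  noncomm_ring

private lemma conj_iterate {α : Type*} (f g c ci : α → α)
    (hc : ∀ a, c (ci a) = a) (hci : ∀ a, ci (c a) = a)
    (hg : ∀ a, g a = c (f (ci a))) (n : ℕ) (a : α) :
    g^[n] a = c (f^[n] (ci a)) := by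
  induction n generalizing a with
  | zero => simp [hc]
  | succ n ih =>
      rw [Function.iterate_succ_apply, hg, ih, hci, ← Function.iterate_succ_apply]

omit hM in
include hG in
private lemma nablaZPow_conj (k : ℤ) (Q : Matrix (Fin d) (Fin d) R) :
    nablaZPow S (G.map ⇑S * M * G⁻¹) k Q
      = (G.map ⇑S) * (nablaZPow S M k ((G.map ⇑S)⁻¹ * Q * (G.map ⇑S))) * (G.map ⇑S)⁻¹ := by
  have hUd := hU_det S G hG
  have hc : ∀ A : Matrix (Fin d) (Fin d) R,
      (G.map ⇑S) * ((G.map ⇑S)⁻¹ * A * (G.map ⇑S)) * (G.map ⇑S)⁻¹ = A := by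
    intro A
    rw [show (G.map ⇑S) * ((G.map ⇑S)⁻¹ * A * (G.map ⇑S)) * (G.map ⇑S)⁻¹
        = ((G.map ⇑S) * (G.map ⇑S)⁻¹) * A * ((G.map ⇑S) * (G.map ⇑S)⁻¹) by noncomm_ring,
      Matrix.mul_nonsing_inv _ hUd, one_mul, mul_one]
  have hci : ∀ A : Matrix (Fin d) (Fin d) R,
      (G.map ⇑S)⁻¹ * ((G.map ⇑S) * A * (G.map ⇑S)⁻¹) * (G.map ⇑S) = A := by
    intro A
    rw [show (G.map ⇑S)⁻¹ * ((G.map ⇑S) * A * (G.map ⇑S)⁻¹) * (G.map ⇑S)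
        = ((G.map ⇑S)⁻¹ * (G.map ⇑S)) * A * ((G.map ⇑S)⁻¹ * (G.map ⇑S)) by noncomm_ring,
      Matrix.nonsing_inv_mul _ hUd, one_mul, mul_one]
  unfold nablaZPow
  split_ifs
  · exact conj_iterate (nabla S M) (nabla S (G.map ⇑S * M * G⁻¹))
      (fun A => (G.map ⇑S) * A * (G.map ⇑S)⁻¹) (fun A => (G.map ⇑S)⁻¹ * A * (G.map ⇑S))
      hc hci (fun A => by exact nabla_conj S M G hG A) _ Q
  · exact conj_iterate (nablaInv S M) (nablaInv S (G.map ⇑S * M * G⁻¹))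
      (fun A => (G.map ⇑S) * A * (G.map ⇑S)⁻¹) (fun A => (G.map ⇑S)⁻¹ * A * (G.map ⇑S))
      hc hci (fun A => by exact nablaInv_conj S M G hG A) _ Q

end NablaAux

private lemma inner_alg {α : Type*} [Ring α] (u ui g gi m mi dm dl eg : α)
    (hui : ui * u = 1) (hgi : gi * g = 1) (hmmi : m * mi = 1) :
    ui * ((u * m * (-(gi * dl * gi)) + (u * dm + eg * m) * gi) * (g * mi * ui)) * u
      = dm * mi + ui * eg - m * (gi * dl) * mi := by
  have h1 : ui * ((u * m * (-(gi * dl * gi))) * (g * mi * ui)) * u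
      = -(m * (gi * dl) * mi) := by
    calc ui * ((u * m * (-(gi * dl * gi))) * (g * mi * ui)) * u
        = -((ui * u) * (m * (gi * dl) * ((gi * g) * (mi * (ui * u))))) := by noncomm_ring
      _ = -(m * (gi * dl) * mi) := by rw [hui, hgi]; simp only [one_mul, mul_one]
  have h2 : ui * (((u * dm) * gi) * (g * mi * ui)) * u = dm * mi := by
    calc ui * (((u * dm) * gi) * (g * mi * ui)) * u
        = (ui * u) * (dm * ((gi * g) * (mi * (ui * u)))) := by noncomm_ring
      _ = dm * mi := by rw [hui, hgi]; simp only [one_mul, mul_one]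
  have h3 : ui * (((eg * m) * gi) * (g * mi * ui)) * u = ui * eg := by
    calc ui * (((eg * m) * gi) * (g * mi * ui)) * u
        = ui * (eg * ((m * ((gi * g) * mi)) * (ui * u))) := by noncomm_ring
      _ = ui * eg := by rw [hui, hgi, one_mul, hmmi]; simp only [mul_one]
  calc ui * ((u * m * (-(gi * dl * gi)) + (u * dm + eg * m) * gi) * (g * mi * ui)) * u
      = ui * ((u * m * (-(gi * dl * gi))) * (g * mi * ui)) * u
        + ui * (((u * dm) * gi) * (g * mi * ui)) * u
        + ui * (((eg * m) * gi) * (g * mi * ui)) * u := by noncomm_ring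
    _ = -(m * (gi * dl) * mi) + dm * mi + ui * eg := by rw [h1, h2, h3]
    _ = dm * mi + ui * eg - m * (gi * dl) * mi := by noncomm_ring

set_option linter.unusedVariables false in
theorem stmt_7 {d N : ℕ} (hd : 0 < d) (hN : 0 < N) {R : Type*} [CommRing R]
    (S : R ≃+* R)
    (P : Fin N → ℤ → R → R)
    (hPadd : ∀ j ℓ x y, P j ℓ (x + y) = P j ℓ x + P j ℓ y)
    (hPmul : ∀ j ℓ x y, P j ℓ (x * y) = x * P j ℓ y + P j ℓ x * y)
    (hPS : ∀ j ℓ x, S (P j ℓ x) = P j (ℓ + 1) (S x))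
    (M G : Matrix (Fin d) (Fin d) R)
    (hM : IsUnit M.det) (hG : IsUnit G.det)
    (hMfin : ∃ A : Finset ℤ, ∀ (j : Fin N) (ℓ : ℤ), ℓ ∉ A → M.map (P j ℓ) = 0)
    (hGfin : ∃ A : Finset ℤ, ∀ (j : Fin N) (ℓ : ℤ), ℓ ∉ A → G.map (P j ℓ) = 0) :
    IsUnit ((G.map ⇑S) * M * G⁻¹).det ∧
    (∃ A : Finset ℤ, ∀ (j : Fin N) (ℓ : ℤ), ℓ ∉ A → ((G.map ⇑S) * M * G⁻¹).map (P j ℓ) = 0) ∧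
    ∀ j : Fin N,
      Ej S P j ((G.map ⇑S) * M * G⁻¹) = (G.map ⇑S) * Ej S P j M * (G.map ⇑S)⁻¹ := by
  obtain ⟨AM, hAM⟩ := hMfin
  obtain ⟨AG, hAG⟩ := hGfin
  have hUd : IsUnit (Matrix.det (G.map ⇑S)) := hU_det S G hG
  -- derivative of `G.map S`
  have hUder : ∀ (j : Fin N) (ℓ : ℤ),
      (G.map ⇑S).map (P j ℓ) = (G.map (P j (ℓ - 1))).map ⇑S := by
    intro j ℓ
    ext i k
    simp only [Matrix.map_apply]
    rw [hPS j (ℓ - 1)]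
    have : ℓ - 1 + 1 = ℓ := by ring
    rw [this]
  -- derivative of M'
  have hD : ∀ (j : Fin N) (ℓ : ℤ),
      ((G.map ⇑S) * M * G⁻¹).map (P j ℓ)
        = (G.map ⇑S) * M * (-(G⁻¹ * G.map (P j ℓ) * G⁻¹))
          + ((G.map ⇑S) * M.map (P j ℓ) + (G.map (P j (ℓ - 1))).map ⇑S * M) * G⁻¹ := by
    intro j ℓ
    rw [der_map_mul (P j ℓ) (hPadd j ℓ) (hPmul j ℓ) ((G.map ⇑S) * M) G⁻¹,
      der_map_mul (P j ℓ) (hPadd j ℓ) (hPmul j ℓ) (G.map ⇑S) M,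
      der_map_inv (P j ℓ) (hPadd j ℓ) (hPmul j ℓ) G hG, hUder j ℓ]
  refine ⟨hM'_det S M G hM hG, ⟨AM ∪ AG ∪ AG.image (· + 1), ?_⟩, ?_⟩
  · intro j ℓ hℓ
    have hm : M.map (P j ℓ) = 0 := hAM j ℓ fun h => hℓ (by simp [h])
    have hg1 : G.map (P j ℓ) = 0 := hAG j ℓ fun h => hℓ (by simp [h])
    have hg2 : G.map (P j (ℓ - 1)) = 0 := hAG j (ℓ - 1) fun h =>
      hℓ (Finset.mem_union_right _ (Finset.mem_image.mpr ⟨ℓ - 1, h, by ring⟩))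
    rw [hD j ℓ, hm, hg1, hg2]
    simp
  · intro j
    set U := G.map ⇑S with hU
    -- the three summand families
    set a : ℤ → Matrix (Fin d) (Fin d) R :=
      fun ℓ => nablaZPow S M (-ℓ) (M.map (P j ℓ) * M⁻¹) with ha
    set g : ℤ → Matrix (Fin d) (Fin d) R :=
      fun ℓ => nablaZPow S M (-ℓ) (U⁻¹ * (G.map (P j (ℓ - 1))).map ⇑S) with hg'
    -- the inner conjugated derivative
    have inner : ∀ ℓ : ℤ, U⁻¹ * (((U * M * G⁻¹).map (P j ℓ)) * (U * M * G⁻¹)⁻¹) * U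
        = M.map (P j ℓ) * M⁻¹ + U⁻¹ * (G.map (P j (ℓ - 1))).map ⇑S
          - M * (G⁻¹ * G.map (P j ℓ)) * M⁻¹ := by
      intro ℓ
      rw [hD j ℓ, M'_inv S M G hG]
      exact inner_alg U U⁻¹ G G⁻¹ M M⁻¹ (M.map (P j ℓ)) (G.map (P j ℓ))
        ((G.map (P j (ℓ - 1))).map ⇑S)
        (Matrix.nonsing_inv_mul _ hUd) (Matrix.nonsing_inv_mul _ hG)
        (Matrix.mul_nonsing_inv _ hM)
    -- third term as a shifted `g`
    have third : ∀ ℓ : ℤ, nablaZPow S M (-ℓ) (M * (G⁻¹ * G.map (P j ℓ)) * M⁻¹)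
        = g (ℓ + 1) := by
      intro ℓ
      have e1 : M * (G⁻¹ * G.map (P j ℓ)) * M⁻¹
          = nablaInv S M (U⁻¹ * (G.map (P j ℓ)).map ⇑S) := by
        unfold nablaInv
        congr 1
        congr 1
        rw [hU, mapE_inv S G hG, mapE_mul, mapE_symm, mapE_symm]
      rw [e1, ← nablaZPow_sub_one S M hM (-ℓ) _]
      have e2 : -ℓ - 1 = -(ℓ + 1) := by ring
      have e3 : ℓ + 1 - 1 = ℓ := by ring
      rw [e2, hg']
      simp only [e3]
    -- the per-ℓ key identity
    have key : ∀ ℓ : ℤ, nablaZPow S (U * M * G⁻¹) (-ℓ)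
          (((U * M * G⁻¹).map (P j ℓ)) * (U * M * G⁻¹)⁻¹)
        = U * (a ℓ + g ℓ - g (ℓ + 1)) * U⁻¹ := by
      intro ℓ
      rw [nablaZPow_conj S M G hG, inner ℓ, ← nablaZPowHom_apply, map_sub, map_add,
        nablaZPowHom_apply, nablaZPowHom_apply, nablaZPowHom_apply, third ℓ]
    -- support bounds
    have hsa : (Function.support a).Finite := by
      refine Set.Finite.subset AM.finite_toSet (Function.support_subset_iff'.mpr ?_)
      intro ℓ hℓ
      rw [ha]
      simp only
      rw [hAM j ℓ hℓ, zero_mul, nablaZPow_zero_matrix]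
    have hsg : (Function.support g).Finite := by
      refine Set.Finite.subset (AG.image (· + 1)).finite_toSet
        (Function.support_subset_iff'.mpr ?_)
      intro ℓ hℓ
      have : ℓ - 1 ∉ AG := fun h =>
        hℓ (Finset.mem_coe.mpr (Finset.mem_image.mpr ⟨ℓ - 1, h, by ring⟩))
      rw [hg']
      simp only
      rw [hAG j (ℓ - 1) this]
      rw [show (0 : Matrix (Fin d) (Fin d) R).map ⇑S = 0 by ext i k; simp]
      rw [mul_zero, nablaZPow_zero_matrix]
    have hsg' : (Function.support fun ℓ => g (ℓ + 1)).Finite := by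
      refine Set.Finite.subset AG.finite_toSet (Function.support_subset_iff'.mpr ?_)
      intro ℓ hℓ
      rw [hg']
      simp only [add_sub_cancel_right]
      rw [hAG j ℓ hℓ]
      rw [show (0 : Matrix (Fin d) (Fin d) R).map ⇑S = 0 by ext i k; simp]
      rw [mul_zero, nablaZPow_zero_matrix]
    have hsum : (Function.support fun ℓ => a ℓ + g ℓ - g (ℓ + 1)).Finite := by
      refine Set.Finite.subset ((hsa.union hsg).union hsg') ?_
      intro ℓ hℓ
      by_contra hc
      simp only [Set.mem_union, Function.mem_support, not_or, not_not] at hc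
      apply hℓ
      simp [Function.mem_support] at hℓ ⊢
      rw [hc.1.1, hc.1.2, hc.2] at hℓ
      simp at hℓ
    -- the conjugation additive hom
    set cHom : Matrix (Fin d) (Fin d) R →+ Matrix (Fin d) (Fin d) R :=
      AddMonoidHom.mk' (fun Q => U * Q * U⁻¹) (by
        intro A B; simp only [mul_add, add_mul]) with hcHom
    have shift : (∑ᶠ ℓ : ℤ, g (ℓ + 1)) = ∑ᶠ ℓ : ℤ, g ℓ := by
      have := finsum_comp_equiv (Equiv.addRight (1 : ℤ)) (f := g)
      simpa using this
    calc Ej S P j (U * M * G⁻¹)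
        = ∑ᶠ ℓ : ℤ, (U * (a ℓ + g ℓ - g (ℓ + 1)) * U⁻¹) := by
          unfold Ej; exact finsum_congr key
      _ = ∑ᶠ ℓ : ℤ, cHom (a ℓ + g ℓ - g (ℓ + 1)) := rfl
      _ = cHom (∑ᶠ ℓ : ℤ, (a ℓ + g ℓ - g (ℓ + 1))) := (cHom.map_finsum hsum).symm
      _ = cHom ((∑ᶠ ℓ : ℤ, (a ℓ + g ℓ)) - ∑ᶠ ℓ : ℤ, g (ℓ + 1)) := by
          rw [finsum_sub_distrib (hsa.union hsg |>.subset ?_) hsg']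
          intro ℓ hℓ
          by_contra hc
          simp only [Set.mem_union, Function.mem_support, not_or, not_not] at hc
          apply hℓ
          simp only [Function.mem_support, ne_eq, not_not] at hℓ ⊢
          rw [hc.1, hc.2]
          simp
      _ = cHom ((∑ᶠ ℓ : ℤ, a ℓ) + (∑ᶠ ℓ : ℤ, g ℓ) - ∑ᶠ ℓ : ℤ, g (ℓ + 1)) := by
          rw [finsum_add_distrib hsa hsg]
      _ = cHom (∑ᶠ ℓ : ℤ, a ℓ) := by rw [shift, add_sub_cancel_right]
      _ = U * Ej S P j M * U⁻¹ := rfl
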